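/- There exists a universal constant C > 0 with the following property. Let n ∈ ℕ, let m ∈ ℤ with m ≥ −1, let ε ∈ [0,1] and C₀, C₁ > 0. Let H : ℝ⁴ → ℝ be measurable with |H(z)| ≤ C₁·2^n for all z and with supp H ⊆ {z ∈ ℝ⁴ : ‖z − (m·4^{−n}, 0)‖_s ≤ (1+√2)·2^{−n}}, and let G : ℝ⁴ → ℝ be measurable with |G(t,x)| ≤ C₀/(|t| + ‖x‖² + ε²) for almost every (t,x). Then z ↦ H(z)G(z) is integrable on ℝ⁴ and |∫_{ℝ⁴} H(z)G(z) dz| ≤ C·C₀·C₁·2^{−2n}/(m+2). -/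

import Mathlib

open MeasureTheory Set Metric

set_option maxHeartbeats 800000

local notation "E3" => EuclideanSpace ℝ (Fin 3)

lemma volume_closedBall_E3 {s : ℝ} (hs : 0 ≤ s) :
    volume (closedBall (0 : E3) s)
      = ENNReal.ofReal (s ^ 3) * volume (ball (0 : E3) 1) := by
  rw [Measure.addHaar_closedBall _ _ hs, finrank_euclideanSpace_fin]

lemma psi_bound {r : ℝ} (hr : 0 < r) :
    Integrable ((closedBall (0 : E3) r).indicator (fun x => (‖x‖ ^ 2)⁻¹)) ∧
    ∫ x, (closedBall (0 : E3) r).indicator (fun x => (‖x‖ ^ 2)⁻¹) x ≤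
      3 * (volume (ball (0 : E3) 1)).toReal * r := by
  set B := volume (ball (0 : E3) 1) with hB
  set ψ : E3 → ℝ := (closedBall (0 : E3) r).indicator (fun x => (‖x‖ ^ 2)⁻¹) with hψ
  have hψm : Measurable ψ :=
    ((measurable_norm.pow_const 2).inv).indicator measurableSet_closedBall
  have hψnn : ∀ x, 0 ≤ ψ x := fun x => Set.indicator_nonneg (fun y _ => by positivity) x
  set c : ℝ := r⁻¹ ^ 2 with hc
  have hc0 : 0 < c := by positivity
  have hlayer : ∫⁻ x, ENNReal.ofReal (ψ x) = ∫⁻ t in Ioi (0:ℝ), volume {a | t ≤ ψ a} :=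
    lintegral_eq_lintegral_meas_le volume (Filter.Eventually.of_forall hψnn)
      hψm.aemeasurable
  have hmeas1 : ∀ t ∈ Ioc (0:ℝ) c, volume {a | t ≤ ψ a} ≤ ENNReal.ofReal (r ^ 3) * B := by
    intro t ht
    refine le_trans (measure_mono ?_) (le_of_eq (volume_closedBall_E3 hr.le))
    intro a ha
    by_contra hc'
    have h0 : ψ a = 0 := Set.indicator_of_notMem hc' _
    have : t ≤ 0 := by rw [← h0]; exact ha
    exact absurd this (not_le.2 ht.1)
  have hmeas2 : ∀ t ∈ Ioi c, volume {a | t ≤ ψ a}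
      ≤ ENNReal.ofReal ((Real.sqrt t)⁻¹ ^ 3) * B := by
    intro t ht
    have ht0 : 0 < t := lt_trans hc0 ht
    refine le_trans (measure_mono ?_) (le_of_eq (volume_closedBall_E3 (by positivity)))
    intro a ha
    have ha' : t ≤ ψ a := ha
    have hmem : a ∈ closedBall (0 : E3) r := by
      by_contra hc'
      have h0 : ψ a = 0 := Set.indicator_of_notMem hc' _
      rw [h0] at ha'; exact absurd ha' (not_le.2 ht0)
    have hval : ψ a = (‖a‖ ^ 2)⁻¹ := Set.indicator_of_mem hmem _
    rw [hval] at ha'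
    have hna : 0 < ‖a‖ := by
      rcases eq_or_lt_of_le (norm_nonneg a) with h | h
      · exfalso; rw [← h] at ha'; simp at ha'; exact absurd (le_trans ha' (by norm_num)) (not_le.2 ht0)
      · exact h
    have h1 : ‖a‖ ^ 2 ≤ t⁻¹ := by
      have := inv_anti₀ ht0 ha'
      rwa [inv_inv] at this
    have h2 : ‖a‖ ≤ (Real.sqrt t)⁻¹ := by
      have := Real.sqrt_le_sqrt h1
      rwa [Real.sqrt_sq (norm_nonneg a), Real.sqrt_inv] at this
    exact mem_closedBall_zero_iff.2 h2
  have hsplit : ∫⁻ t in Ioi (0:ℝ), volume {a | t ≤ ψ a}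
      ≤ ENNReal.ofReal r * B + ENNReal.ofReal (2 * r) * B := by
    have hunion : Ioi (0:ℝ) = Ioc 0 c ∪ Ioi c := (Ioc_union_Ioi_eq_Ioi hc0.le).symm
    calc ∫⁻ t in Ioi (0:ℝ), volume {a | t ≤ ψ a}
        = ∫⁻ t in Ioc 0 c ∪ Ioi c, volume {a | t ≤ ψ a} := by rw [← hunion]
      _ ≤ (∫⁻ t in Ioc 0 c, volume {a | t ≤ ψ a}) + ∫⁻ t in Ioi c, volume {a | t ≤ ψ a} :=
          lintegral_union_le _ _ _
      _ ≤ ENNReal.ofReal r * B + ENNReal.ofReal (2 * r) * B := by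
          gcongr
          · calc ∫⁻ t in Ioc 0 c, volume {a | t ≤ ψ a}
                ≤ ∫⁻ _ in Ioc (0:ℝ) c, (ENNReal.ofReal (r ^ 3) * B) :=
                  setLIntegral_mono' measurableSet_Ioc hmeas1
              _ = ENNReal.ofReal (r ^ 3) * B * volume (Ioc (0:ℝ) c) := by
                  rw [setLIntegral_const]
              _ = ENNReal.ofReal r * B := by
                  rw [Real.volume_Ioc, sub_zero, mul_comm _ (ENNReal.ofReal c),
                    ← mul_assoc, ← ENNReal.ofReal_mul hc0.le]
                  congr 2
                  rw [hc]; field_simp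
          · calc ∫⁻ t in Ioi c, volume {a | t ≤ ψ a}
                ≤ ∫⁻ t in Ioi c, ENNReal.ofReal ((Real.sqrt t)⁻¹ ^ 3) * B :=
                  setLIntegral_mono' measurableSet_Ioi hmeas2
              _ = (∫⁻ t in Ioi c, ENNReal.ofReal ((Real.sqrt t)⁻¹ ^ 3)) * B :=
                  lintegral_mul_const' B _ measure_ball_lt_top.ne
              _ = (∫⁻ t in Ioi c, ENNReal.ofReal (t ^ (-(3/2) : ℝ))) * B := by
                  congr 1
                  refine setLIntegral_congr_fun measurableSet_Ioi
                    (fun t ht => ?_)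
                  have ht0 : (0:ℝ) ≤ t := (lt_trans hc0 ht).le
                  have hconv : (Real.sqrt t)⁻¹ ^ 3 = t ^ (-(3/2) : ℝ) := by
                    rw [Real.sqrt_eq_rpow, ← Real.rpow_neg ht0,
                      ← Real.rpow_natCast (t ^ (-(1/2):ℝ)) 3, ← Real.rpow_mul ht0]
                    norm_num
                  rw [hconv]
              _ = ENNReal.ofReal (2 * r) * B := by
                  congr 1
                  have hnn : (0 : ℝ → ℝ) ≤ᵐ[volume.restrict (Ioi c)] fun t => t ^ (-(3/2) : ℝ) := by
                    filter_upwards [ae_restrict_mem measurableSet_Ioi] with t ht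
                    exact Real.rpow_nonneg (lt_trans hc0 ht).le _
                  rw [← ofReal_integral_eq_lintegral_ofReal
                    (integrableOn_Ioi_rpow_of_lt (by norm_num) hc0) hnn,
                    integral_Ioi_rpow_of_lt (by norm_num) hc0]
                  congr 1
                  have hcr : c ^ ((-(3/2):ℝ) + 1) = r := by
                    rw [hc, ← Real.rpow_natCast r⁻¹ 2, ← Real.rpow_mul (by positivity)]
                    norm_num
                    rw [Real.rpow_neg_one, inv_inv]
                  rw [hcr]; ring
  refine ⟨⟨hψm.aestronglyMeasurable, ?_⟩, ?_⟩
  · rw [hasFiniteIntegral_iff_ofReal (Filter.Eventually.of_forall hψnn), hlayer]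
    refine lt_of_le_of_lt hsplit ?_
    exact ENNReal.add_lt_top.2 ⟨ENNReal.mul_lt_top ENNReal.ofReal_lt_top measure_ball_lt_top,
      ENNReal.mul_lt_top ENNReal.ofReal_lt_top measure_ball_lt_top⟩
  · rw [integral_eq_lintegral_of_nonneg_ae (Filter.Eventually.of_forall hψnn)
      hψm.aestronglyMeasurable, hlayer]
    have hfin1 : ENNReal.ofReal r * B ≠ ⊤ :=
      ENNReal.mul_ne_top ENNReal.ofReal_ne_top measure_ball_lt_top.ne
    have hfin2 : ENNReal.ofReal (2 * r) * B ≠ ⊤ :=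
      ENNReal.mul_ne_top ENNReal.ofReal_ne_top measure_ball_lt_top.ne
    refine le_trans (ENNReal.toReal_mono (by
      exact ENNReal.add_ne_top.2 ⟨hfin1, hfin2⟩) hsplit) ?_
    rw [ENNReal.toReal_add hfin1 hfin2, ENNReal.toReal_mul, ENNReal.toReal_mul,
      ENNReal.toReal_ofReal hr.le, ENNReal.toReal_ofReal (by positivity)]
    exact le_of_eq (by ring)

lemma prod_bound {φ : ℝ → ℝ} {ψ : E3 → ℝ} (hφ : Integrable φ) (hψ : Integrable ψ)
    {F : ℝ × E3 → ℝ} (hF : AEStronglyMeasurable F volume)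
    (hb : ∀ᵐ z : ℝ × E3, |F z| ≤ φ z.1 * ψ z.2) :
    Integrable F ∧ |∫ z, F z| ≤ (∫ t, φ t) * ∫ x, ψ x := by
  have hvol : (volume : Measure (ℝ × E3)) = (volume : Measure ℝ).prod volume :=
    Measure.volume_eq_prod _ _
  have hD : Integrable (fun z : ℝ × E3 => φ z.1 * ψ z.2) := by
    rw [hvol]; exact hφ.mul_prod hψ
  have hb' : ∀ᵐ z : ℝ × E3, ‖F z‖ ≤ φ z.1 * ψ z.2 := by
    simpa [Real.norm_eq_abs] using hb
  refine ⟨hD.mono' hF hb', ?_⟩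
  calc |∫ z, F z| = ‖∫ z, F z‖ := (Real.norm_eq_abs _).symm
    _ ≤ ∫ z : ℝ × E3, φ z.1 * ψ z.2 := norm_integral_le_of_norm_le hD hb'
    _ = (∫ t, φ t) * ∫ x, ψ x := by rw [hvol, integral_prod_mul]

/-- The parabolic scaled norm `‖(t,x)‖_s = |t|^{1/2} + ‖x‖` on `ℝ⁴ = ℝ × ℝ³`. -/
noncomputable def parNorm (z : ℝ × EuclideanSpace ℝ (Fin 3)) : ℝ :=
  Real.sqrt |z.1| + ‖z.2‖

/-- the key integral estimate (Lemma 5.1 of the corrigendum). If `H` is bounded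
by `C₁ 2ⁿ` and supported in the scaled ball of radius `(1+√2)2^{-n}` around `(m·4^{-n},0)`,
and `|G(t,x)| ≤ C₀/(|t| + ‖x‖² + ε²)` a.e., then `H·G` is integrable and
`|∫ H G| ≤ C·C₀·C₁·2^{-2n}/(m+2)` for a universal constant `C`. -/
theorem stmt_5 :
    ∃ C : ℝ, 0 < C ∧
      ∀ (n : ℕ) (m : ℤ), -1 ≤ m →
      ∀ ε : ℝ, ε ∈ Set.Icc (0 : ℝ) 1 →
      ∀ C₀ C₁ : ℝ, 0 < C₀ → 0 < C₁ →
      ∀ H G : ℝ × EuclideanSpace ℝ (Fin 3) → ℝ,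
        Measurable H →
        (∀ z, |H z| ≤ C₁ * 2 ^ n) →
        (Function.support H ⊆
          {z : ℝ × EuclideanSpace ℝ (Fin 3) |
            parNorm (z.1 - (m : ℝ) * (4 : ℝ) ^ (-(n : ℤ)), z.2) ≤
              (1 + Real.sqrt 2) * (2 : ℝ) ^ (-(n : ℤ))}) →
        Measurable G →
        (∀ᵐ z : ℝ × EuclideanSpace ℝ (Fin 3),
          |G z| ≤ C₀ / (|z.1| + ‖z.2‖ ^ 2 + ε ^ 2)) →
        Integrable (fun z => H z * G z) ∧
          |∫ z : ℝ × EuclideanSpace ℝ (Fin 3), H z * G z| ≤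
            C * C₀ * C₁ * (2 : ℝ) ^ (-(2 * n : ℤ)) / ((m : ℝ) + 2) := by
  set Bt := (volume (ball (0 : E3) 1)).toReal with hBt
  have hBt0 : 0 ≤ Bt := ENNReal.toReal_nonneg
  refine ⟨4000 * (Bt + 1), by nlinarith, ?_⟩
  intro n m hm ε hε C₀ C₁ hC₀ hC₁ H G hHm hHb hHsupp hGm hGb
  set rn : ℝ := (2:ℝ) ^ (-(n:ℤ)) with hrn
  have hrn0 : 0 < rn := by positivity
  set p : ℝ := (2:ℝ) ^ (n:ℕ) with hp
  have hp0 : 0 < p := by positivity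
  have hprn : p * rn = 1 := by
    rw [hp, hrn, ← zpow_natCast (2:ℝ) n, ← zpow_add₀ (two_ne_zero (α := ℝ))]
    simp
  have hq : (4:ℝ) ^ (-(n:ℤ)) = rn ^ 2 := by
    rw [show ((4:ℝ)) = (2:ℝ) ^ (2:ℤ) by norm_num, ← zpow_mul,
      show (2:ℤ) * -(n:ℤ) = (-(n:ℤ)) * 2 by ring, zpow_mul, hrn]
    norm_num [zpow_ofNat]
  have h2n : (2:ℝ) ^ (-(2 * n:ℤ)) = rn ^ 2 := by
    rw [show (-(2 * n:ℤ)) = (-(n:ℤ)) * 2 by ring, zpow_mul, hrn]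
    norm_num [zpow_ofNat]
  set r : ℝ := (1 + Real.sqrt 2) * rn with hr
  have hs2 : Real.sqrt 2 ≤ 1.5 := by
    rw [show (1.5:ℝ) = Real.sqrt (1.5 ^ 2) from (Real.sqrt_sq (by norm_num)).symm]
    exact Real.sqrt_le_sqrt (by norm_num)
  have hs20 : 0 ≤ Real.sqrt 2 := Real.sqrt_nonneg 2
  have hr0 : 0 < r := by rw [hr]; nlinarith
  have hrle : r ≤ 2.5 * rn := by rw [hr]; nlinarith
  set t₀ : ℝ := (m:ℝ) * ((4:ℝ) ^ (-(n:ℤ))) with ht₀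
  have hmem : ∀ z : ℝ × E3, H z ≠ 0 →
      z.1 ∈ Icc (t₀ - r ^ 2) (t₀ + r ^ 2) ∧ z.2 ∈ closedBall (0:E3) r := by
    intro z hz
    have h := hHsupp (Function.mem_support.2 hz)
    simp only [Set.mem_setOf_eq] at h
    rw [show parNorm (z.1 - (m : ℝ) * (4 : ℝ) ^ (-(n : ℤ)), z.2)
        = Real.sqrt |z.1 - t₀| + ‖z.2‖ from rfl] at h
    have h1 : Real.sqrt |z.1 - t₀| ≤ r := by
      have := norm_nonneg z.2; rw [hr]; linarith [h]
    have h2 : ‖z.2‖ ≤ r := by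
      have := Real.sqrt_nonneg |z.1 - t₀|; rw [hr]; linarith [h]
    have habs : |z.1 - t₀| ≤ r ^ 2 := by
      calc |z.1 - t₀| = Real.sqrt |z.1 - t₀| ^ 2 := (Real.sq_sqrt (abs_nonneg _)).symm
        _ ≤ r ^ 2 := pow_le_pow_left₀ (Real.sqrt_nonneg _) h1 2
    have := abs_le.1 habs
    exact ⟨Set.mem_Icc.2 ⟨by linarith [this.1], by linarith [this.2]⟩,
      mem_closedBall_zero_iff.2 h2⟩
  have hm2 : (0:ℝ) < (m:ℝ) + 2 := by
    have : (-1:ℝ) ≤ (m:ℝ) := by exact_mod_cast hm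
    linarith
  have hFmeas : AEStronglyMeasurable (fun z : ℝ × E3 => H z * G z) volume :=
    (hHm.mul hGm).aestronglyMeasurable
  have hIccInt : ∀ K : ℝ, Integrable ((Icc (t₀ - r ^ 2) (t₀ + r ^ 2)).indicator
      (fun _ : ℝ => K)) := by
    intro K
    rw [integrable_indicator_iff measurableSet_Icc]
    exact integrableOn_const measure_Icc_lt_top.ne
  have hIccVal : ∀ K : ℝ, ∫ t, (Icc (t₀ - r ^ 2) (t₀ + r ^ 2)).indicator
      (fun _ : ℝ => K) t = (2 * r ^ 2) * K := by
    intro K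
    rw [integral_indicator_const _ measurableSet_Icc, measureReal_def, Real.volume_Icc, smul_eq_mul,
      ENNReal.toReal_ofReal (by nlinarith), show t₀ + r ^ 2 - (t₀ - r ^ 2) = 2 * r ^ 2 by ring]
  rcases le_or_gt m 7 with hm7 | hm7
  · -- small m
    have hm7' : (m:ℝ) ≤ 7 := by exact_mod_cast hm7
    obtain ⟨hψint, hψval⟩ := psi_bound (r := r) hr0
    rw [← hBt] at hψval
    have hzero : ∀ᵐ z : ℝ × E3, z.2 ≠ (0:E3) := by
      have hset : {z : ℝ × E3 | z.2 = 0} = (Set.univ : Set ℝ) ×ˢ ({0} : Set E3) := by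
        ext z; rw [Set.mem_prod]; simp
      have hnull : volume {z : ℝ × E3 | z.2 = 0} = 0 := by
        rw [hset, Measure.volume_eq_prod, Measure.prod_prod, measure_singleton, mul_zero]
      rw [ae_iff]
      simpa only [ne_eq, not_not] using hnull
    have hb : ∀ᵐ z : ℝ × E3, |H z * G z| ≤
        (Icc (t₀ - r ^ 2) (t₀ + r ^ 2)).indicator (fun _ : ℝ => C₀ * C₁ * p) z.1 *
        (closedBall (0:E3) r).indicator (fun x => (‖x‖ ^ 2)⁻¹) z.2 := by
      filter_upwards [hGb, hzero] with z hGz hz2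
      by_cases hz : H z = 0
      · rw [hz, zero_mul, abs_zero]
        exact mul_nonneg (Set.indicator_nonneg (fun _ _ => by positivity) _)
          (Set.indicator_nonneg (fun _ _ => by positivity) _)
      · obtain ⟨h1, h2⟩ := hmem z hz
        rw [abs_mul, Set.indicator_of_mem h1, Set.indicator_of_mem h2]
        have hx2 : 0 < ‖z.2‖ ^ 2 := by
          have : ‖z.2‖ ≠ 0 := norm_ne_zero_iff.2 hz2
          positivity
        have hden : ‖z.2‖ ^ 2 ≤ |z.1| + ‖z.2‖ ^ 2 + ε ^ 2 := by
          nlinarith [abs_nonneg z.1, sq_nonneg ε]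
        have hG2 : |G z| ≤ C₀ * (‖z.2‖ ^ 2)⁻¹ := by
          calc |G z| ≤ C₀ / (|z.1| + ‖z.2‖ ^ 2 + ε ^ 2) := hGz
            _ ≤ C₀ / (‖z.2‖ ^ 2) := by gcongr
            _ = C₀ * (‖z.2‖ ^ 2)⁻¹ := div_eq_mul_inv _ _
        calc |H z| * |G z| ≤ (C₁ * p) * (C₀ * (‖z.2‖ ^ 2)⁻¹) :=
            mul_le_mul (hHb z) hG2 (abs_nonneg _) (by positivity)
          _ = (C₀ * C₁ * p) * (‖z.2‖ ^ 2)⁻¹ := by ring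
    obtain ⟨hint, hle⟩ := prod_bound (hIccInt (C₀ * C₁ * p)) hψint hFmeas hb
    refine ⟨hint, ?_⟩
    have hr3 : r ^ 3 ≤ 15.7 * rn ^ 3 := by
      calc r ^ 3 ≤ (2.5 * rn) ^ 3 := pow_le_pow_left₀ hr0.le hrle 3
        _ ≤ 15.7 * rn ^ 3 := by nlinarith [sq_nonneg rn, hrn0.le]
    have hkey : p * rn ^ 3 = rn ^ 2 := by
      calc p * rn ^ 3 = (p * rn) * rn ^ 2 := by ring
        _ = rn ^ 2 := by rw [hprn]; ring
    have e2 : p * r ^ 3 ≤ 15.7 * rn ^ 2 := by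
      calc p * r ^ 3 ≤ p * (15.7 * rn ^ 3) := mul_le_mul_of_nonneg_left hr3 hp0.le
        _ = 15.7 * (p * rn ^ 3) := by ring
        _ = 15.7 * rn ^ 2 := by rw [hkey]
    rw [h2n, le_div_iff₀ hm2]
    have hX6 : (0:ℝ) ≤ 6 * (C₀ * C₁ * Bt) := by
      have := mul_nonneg (mul_nonneg hC₀.le hC₁.le) hBt0; linarith
    have h9 : (m:ℝ) + 2 ≤ 9 := by linarith
    have hY : (p * r ^ 3) * ((m:ℝ) + 2) ≤ (15.7 * rn ^ 2) * 9 :=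
      mul_le_mul e2 h9 hm2.le (by positivity)
    calc |∫ z : ℝ × E3, H z * G z| * ((m:ℝ) + 2)
        ≤ ((∫ t, (Icc (t₀ - r ^ 2) (t₀ + r ^ 2)).indicator (fun _ : ℝ => C₀ * C₁ * p) t) *
            ∫ x, (closedBall (0:E3) r).indicator (fun x : E3 => (‖x‖ ^ 2)⁻¹) x) * ((m:ℝ) + 2) :=
          mul_le_mul_of_nonneg_right hle hm2.le
      _ ≤ ((2 * r ^ 2) * (C₀ * C₁ * p) * (3 * Bt * r)) * ((m:ℝ) + 2) := by
          refine mul_le_mul_of_nonneg_right ?_ hm2.le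
          rw [hIccVal (C₀ * C₁ * p)]
          exact mul_le_mul_of_nonneg_left hψval (by positivity)
      _ = (6 * (C₀ * C₁ * Bt)) * ((p * r ^ 3) * ((m:ℝ) + 2)) := by ring
      _ ≤ (6 * (C₀ * C₁ * Bt)) * ((15.7 * rn ^ 2) * 9) :=
          mul_le_mul_of_nonneg_left hY hX6
      _ ≤ 4000 * (Bt + 1) * C₀ * C₁ * rn ^ 2 := by
          nlinarith [mul_nonneg (mul_nonneg hC₀.le hC₁.le) (sq_nonneg rn),
            mul_nonneg (mul_nonneg (mul_nonneg hC₀.le hC₁.le) (sq_nonneg rn)) hBt0]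
  · -- large m
    have hm8 : (8:ℝ) ≤ (m:ℝ) := by exact_mod_cast (by omega : (8:ℤ) ≤ m)
    set KB : ℝ := 10 * C₀ * C₁ * p ^ 3 / ((m:ℝ) + 2) with hKB
    have hKB0 : 0 < KB := div_pos (by positivity) hm2
    have hψint : Integrable ((closedBall (0:E3) r).indicator (fun _ : E3 => (1:ℝ))) := by
      rw [integrable_indicator_iff measurableSet_closedBall]
      exact integrableOn_const measure_closedBall_lt_top.ne
    have hψval : ∫ x, (closedBall (0:E3) r).indicator (fun _ : E3 => (1:ℝ)) x = r ^ 3 * Bt := by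
      rw [integral_indicator_const _ measurableSet_closedBall, smul_eq_mul, mul_one, measureReal_def,
        volume_closedBall_E3 hr0.le, ENNReal.toReal_mul,
        ENNReal.toReal_ofReal (by positivity), ← hBt]
    have hpos : (0:ℝ) < ((m:ℝ) - 7) * rn ^ 2 := by nlinarith [sq_nonneg rn]
    have hlow : ∀ z : ℝ × E3, H z ≠ 0 → ((m:ℝ) - 7) * rn ^ 2 ≤ |z.1| := by
      intro z hz
      obtain ⟨h1, _⟩ := hmem z hz
      have h1' := (Set.mem_Icc.1 h1).1
      have hr2 : r ^ 2 ≤ 6.25 * rn ^ 2 := by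
        calc r ^ 2 ≤ (2.5 * rn) ^ 2 := pow_le_pow_left₀ hr0.le hrle 2
          _ = 6.25 * rn ^ 2 := by ring
      have ht0eq : t₀ = (m:ℝ) * rn ^ 2 := by rw [ht₀, hq]
      have hz1 : ((m:ℝ) - 7) * rn ^ 2 ≤ z.1 := by nlinarith [sq_nonneg rn]
      exact le_trans hz1 (le_abs_self _)
    have hkey2 : p ^ 3 * rn ^ 2 = p := by
      calc p ^ 3 * rn ^ 2 = p * (p * rn) ^ 2 := by ring
        _ = p := by rw [hprn]; ring
    have hb : ∀ᵐ z : ℝ × E3, |H z * G z| ≤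
        (Icc (t₀ - r ^ 2) (t₀ + r ^ 2)).indicator (fun _ : ℝ => KB) z.1 *
        (closedBall (0:E3) r).indicator (fun _ : E3 => (1:ℝ)) z.2 := by
      filter_upwards [hGb] with z hGz
      by_cases hz : H z = 0
      · rw [hz, zero_mul, abs_zero]
        exact mul_nonneg (Set.indicator_nonneg (fun _ _ => hKB0.le) _)
          (Set.indicator_nonneg (fun _ _ => zero_le_one) _)
      · obtain ⟨h1, h2⟩ := hmem z hz
        rw [abs_mul, Set.indicator_of_mem h1, Set.indicator_of_mem h2]
        have hden : ((m:ℝ) - 7) * rn ^ 2 ≤ |z.1| + ‖z.2‖ ^ 2 + ε ^ 2 := by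
          have := hlow z hz
          nlinarith [sq_nonneg ε, sq_nonneg ‖z.2‖]
        have hG2 : |G z| ≤ C₀ / (((m:ℝ) - 7) * rn ^ 2) :=
          le_trans hGz (div_le_div_of_nonneg_left hC₀.le hpos hden)
        calc |H z| * |G z| ≤ (C₁ * p) * (C₀ / (((m:ℝ) - 7) * rn ^ 2)) :=
            mul_le_mul (hHb z) hG2 (abs_nonneg _) (by positivity)
          _ = (C₁ * p * C₀) / (((m:ℝ) - 7) * rn ^ 2) := by ring
          _ ≤ KB * 1 := by
              rw [mul_one, hKB, div_le_div_iff₀ hpos hm2]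
              have hrhs : 10 * C₀ * C₁ * p ^ 3 * (((m:ℝ) - 7) * rn ^ 2)
                  = 10 * C₀ * C₁ * p * ((m:ℝ) - 7) := by
                calc 10 * C₀ * C₁ * p ^ 3 * (((m:ℝ) - 7) * rn ^ 2)
                    = 10 * C₀ * C₁ * ((m:ℝ) - 7) * (p ^ 3 * rn ^ 2) := by ring
                  _ = 10 * C₀ * C₁ * p * ((m:ℝ) - 7) := by rw [hkey2]; ring
              rw [hrhs]
              nlinarith [mul_nonneg (mul_pos (mul_pos hC₀ hC₁) hp0).le
                (show (0:ℝ) ≤ (m:ℝ) - 8 by linarith)]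
    obtain ⟨hint, hle⟩ := prod_bound (hIccInt KB) hψint hFmeas hb
    refine ⟨hint, ?_⟩
    rw [h2n]
    have hr5 : r ^ 5 ≤ 98 * rn ^ 5 := by
      calc r ^ 5 ≤ (2.5 * rn) ^ 5 := pow_le_pow_left₀ hr0.le hrle 5
        _ = 97.65625 * rn ^ 5 := by ring
        _ ≤ 98 * rn ^ 5 := by nlinarith [pow_nonneg hrn0.le 5]
    have hkey5 : p ^ 3 * rn ^ 5 = rn ^ 2 := by
      calc p ^ 3 * rn ^ 5 = (p * rn) ^ 3 * rn ^ 2 := by ring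
        _ = rn ^ 2 := by rw [hprn]; ring
    have hX : 20 * C₀ * C₁ * Bt * (p ^ 3 * r ^ 5) ≤ 4000 * (Bt + 1) * C₀ * C₁ * rn ^ 2 := by
      have h1 : p ^ 3 * r ^ 5 ≤ 98 * rn ^ 2 := by
        calc p ^ 3 * r ^ 5 ≤ p ^ 3 * (98 * rn ^ 5) := mul_le_mul_of_nonneg_left hr5 (by positivity)
          _ = 98 * (p ^ 3 * rn ^ 5) := by ring
          _ = 98 * rn ^ 2 := by rw [hkey5]
      have h2 : (0:ℝ) ≤ 20 * C₀ * C₁ * Bt := by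
        nlinarith [mul_nonneg (mul_nonneg hC₀.le hC₁.le) hBt0]
      calc 20 * C₀ * C₁ * Bt * (p ^ 3 * r ^ 5) = (20 * C₀ * C₁ * Bt) * (p ^ 3 * r ^ 5) := by ring
        _ ≤ (20 * C₀ * C₁ * Bt) * (98 * rn ^ 2) := mul_le_mul_of_nonneg_left h1 h2
        _ ≤ 4000 * (Bt + 1) * C₀ * C₁ * rn ^ 2 := by
            nlinarith [mul_nonneg (mul_nonneg hC₀.le hC₁.le) (sq_nonneg rn),
              mul_nonneg (mul_nonneg (mul_nonneg hC₀.le hC₁.le) (sq_nonneg rn)) hBt0]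
    calc |∫ z : ℝ × E3, H z * G z|
        ≤ (∫ t, (Icc (t₀ - r ^ 2) (t₀ + r ^ 2)).indicator (fun _ : ℝ => KB) t) *
          ∫ x, (closedBall (0:E3) r).indicator (fun _ : E3 => (1:ℝ)) x := hle
      _ = (2 * r ^ 2 * KB) * (r ^ 3 * Bt) := by rw [hIccVal KB, hψval]
      _ = (20 * C₀ * C₁ * Bt * (p ^ 3 * r ^ 5)) / ((m:ℝ) + 2) := by rw [hKB]; ring
      _ ≤ 4000 * (Bt + 1) * C₀ * C₁ * rn ^ 2 / ((m:ℝ) + 2) := by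
          rw [div_le_div_iff₀ hm2 hm2]
          exact mul_le_mul_of_nonneg_right hX hm2.le
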